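/- For the Hugoniot curve through a characteristic point (t₀, z₀, 0), with Y-component Y(z) = -2c(z-z₀)((t₀z₀(1+z₀²)+1)z + (t₀(1+z₀²)-z₀))/((z₀²+1)((b₁-1)z²+1)), the derivative dY/dz at z = z₀ equals -2c(z₀²+1)t₀/((b₁-1)z₀²+1). In particular, for c > 0 and b₁ > 1, dY/dz(z₀) > 0 if and only if t₀ < 0. -/

import Mathlib

/-- The derivative at `z = z₀` of the `Y`-component of the Hugoniot curve
through a characteristic point `(t₀, z₀, 0)`, and its sign. -/
theorem stmt12 (b1 c t0 z0 : ℝ) (hb : 1 < b1) (hc : 0 < c) :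
    let Y : ℝ → ℝ := fun z =>
      -2 * c * (z - z0) * ((t0 * z0 * (1 + z0 ^ 2) + 1) * z + (t0 * (1 + z0 ^ 2) - z0)) /
        ((z0 ^ 2 + 1) * ((b1 - 1) * z ^ 2 + 1))
    deriv Y z0 = -2 * c * (z0 ^ 2 + 1) * t0 / ((b1 - 1) * z0 ^ 2 + 1) ∧
    (0 < deriv Y z0 ↔ t0 < 0) := by
  intro Y
  have hd0 : (0:ℝ) < (b1 - 1) * z0 ^ 2 + 1 := by nlinarith [sq_nonneg z0]
  have hz0 : (0:ℝ) < z0 ^ 2 + 1 := by positivity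
  have hD : ((z0 ^ 2 + 1) * ((b1 - 1) * z0 ^ 2 + 1)) ≠ 0 := by positivity
  have hnum : HasDerivAt (fun z : ℝ =>
      -2 * c * (z - z0) * ((t0 * z0 * (1 + z0 ^ 2) + 1) * z + (t0 * (1 + z0 ^ 2) - z0)))
      (-2 * c * ((t0 * z0 * (1 + z0 ^ 2) + 1) * z0 + (t0 * (1 + z0 ^ 2) - z0))) z0 := by
    have h1 : HasDerivAt (fun z : ℝ => -2 * c * (z - z0)) (-2 * c) z0 := by
      simpa using ((hasDerivAt_id z0).sub_const z0).const_mul (-2 * c)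
    have h2 : HasDerivAt (fun z : ℝ =>
        (t0 * z0 * (1 + z0 ^ 2) + 1) * z + (t0 * (1 + z0 ^ 2) - z0))
        (t0 * z0 * (1 + z0 ^ 2) + 1) z0 := by
      simpa using ((hasDerivAt_id z0).const_mul (t0 * z0 * (1 + z0 ^ 2) + 1)).add_const
        (t0 * (1 + z0 ^ 2) - z0)
    have := h1.mul h2
    refine this.congr_deriv ?_
    ring
  have hden : HasDerivAt (fun z : ℝ => (z0 ^ 2 + 1) * ((b1 - 1) * z ^ 2 + 1))
      ((z0 ^ 2 + 1) * ((b1 - 1) * (2 * z0))) z0 := by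
    have h3 : HasDerivAt (fun z : ℝ => z ^ 2) (2 * z0) z0 := by
      simpa using hasDerivAt_pow 2 z0
    simpa [mul_assoc] using (((h3.const_mul (b1 - 1)).add_const 1).const_mul (z0 ^ 2 + 1))
  have hY : HasDerivAt Y (-2 * c * (z0 ^ 2 + 1) * t0 / ((b1 - 1) * z0 ^ 2 + 1)) z0 := by
    have := hnum.div hden hD
    refine this.congr_deriv ?_
    rw [div_eq_div_iff (pow_ne_zero 2 hD) hd0.ne']
    ring
  have hderiv : deriv Y z0 = -2 * c * (z0 ^ 2 + 1) * t0 / ((b1 - 1) * z0 ^ 2 + 1) := hY.deriv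
  refine ⟨hderiv, ?_⟩
  rw [hderiv]
  rw [div_pos_iff]
  constructor
  · rintro (⟨h, _⟩ | ⟨_, h⟩)
    · nlinarith [mul_pos hc hz0]
    · nlinarith [mul_pos hc hz0]
  · intro ht
    left
    refine ⟨?_, hd0⟩
    nlinarith [mul_pos hc hz0]
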